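/- The function 𝓗(w) = 𝓛₂(2w/(1+w)) + (1/4)(log((1-w)/(1+w)))² is odd: 𝓗(-w) = -𝓗(w), for w in ℂ with w not in (-∞,-1] ∪ [1,∞). -/

import Mathlib

open Complex

/-- The dilogarithm `𝓛₂(z) = -∫₀^z log(1-s)/s ds`, as an integral along the
straight path from `0` to `z`. -/
noncomputable def dilog (z : ℂ) : ℂ :=
  -∫ t in (0:ℝ)..1, Complex.log (1 - (t : ℂ) * z) / (t : ℂ)

/-- `𝓗(w) = 𝓛₂(2w/(1+w)) + (1/4)(log((1-w)/(1+w)))²`. -/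
noncomputable def scrH (w : ℂ) : ℂ :=
  dilog (2 * w / (1 + w)) + (1/4) * (Complex.log ((1 - w) / (1 + w)))^2

namespace ScrHAux

open MeasureTheory Set Metric intervalIntegral Filter Topology

/-- Off the branch cut `[1, ∞)` of `dilog`. -/
def OffCut (z : ℂ) : Prop := ¬(z.im = 0 ∧ 1 ≤ z.re)

lemma isOpen_offCut : IsOpen {z : ℂ | OffCut z} := by
  have h : IsClosed {z : ℂ | z.im = 0 ∧ 1 ≤ z.re} :=
    (isClosed_eq Complex.continuous_im continuous_const).inter
      (isClosed_le continuous_const Complex.continuous_re)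
  have : {z : ℂ | OffCut z} = {z : ℂ | z.im = 0 ∧ 1 ≤ z.re}ᶜ := rfl
  rw [this]
  exact h.isOpen_compl

lemma slit_of_offCut {z : ℂ} (hz : OffCut z) {t : ℝ} (ht0 : 0 ≤ t) (ht1 : t ≤ 1) :
    1 - (t : ℂ) * z ∈ Complex.slitPlane := by
  rw [Complex.mem_slitPlane_iff]
  unfold OffCut at hz
  push_neg at hz
  simp only [Complex.sub_re, Complex.sub_im, Complex.one_re, Complex.one_im, Complex.mul_re,
    Complex.mul_im, Complex.ofReal_re, Complex.ofReal_im, zero_mul, sub_zero, zero_add]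
  rcases eq_or_ne z.im 0 with h | h
  · left
    have := hz h
    simp [h]
    rcases le_or_gt z.re 0 with h' | h'
    · nlinarith [mul_nonpos_of_nonneg_of_nonpos ht0 h']
    · nlinarith [mul_le_mul_of_nonneg_right ht1 h'.le]
  · rcases eq_or_lt_of_le ht0 with rfl | ht0'
    · left; norm_num
    · right
      intro hc
      have : t * z.im = 0 := by linarith
      exact h (by
        rcases mul_eq_zero.mp this with h' | h'
        · exact absurd h' (ne_of_gt ht0')
        · exact h')

lemma ne_zero_of_offCut {z : ℂ} (hz : OffCut z) {t : ℝ} (ht0 : 0 ≤ t) (ht1 : t ≤ 1) :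
    1 - (t : ℂ) * z ≠ 0 :=
  Complex.slitPlane_ne_zero (slit_of_offCut hz ht0 ht1)


/-- Uniform lower bound for `‖1 - t*x‖` on a compact neighborhood. -/
lemma exists_ball_bound {z : ℂ} (hz : OffCut z) :
    ∃ ε > 0, ∃ c > 0, (closedBall z ε ⊆ {x : ℂ | OffCut x}) ∧
      ∀ t ∈ Icc (0:ℝ) 1, ∀ x ∈ closedBall z ε, c ≤ ‖1 - (t : ℂ) * x‖ := by
  obtain ⟨ε, hε, hball⟩ := (Metric.nhds_basis_closedBall.mem_iff).mp
    (isOpen_offCut.mem_nhds (by exact hz))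
  have hK : IsCompact ((Icc (0:ℝ) 1) ×ˢ closedBall z ε) :=
    isCompact_Icc.prod (isCompact_closedBall _ _)
  have hne : ((Icc (0:ℝ) 1) ×ˢ closedBall z ε).Nonempty :=
    ⟨(0, z), by constructor <;> simp [hε.le]⟩
  have hcont : ContinuousOn (fun p : ℝ × ℂ => ‖1 - (p.1 : ℂ) * p.2‖)
      ((Icc (0:ℝ) 1) ×ˢ closedBall z ε) :=
    (Continuous.norm (continuous_const.sub
      ((Complex.continuous_ofReal.comp continuous_fst).mul continuous_snd))).continuousOn
  obtain ⟨p, hpK, hpmin⟩ := hK.exists_isMinOn hne hcont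
  refine ⟨ε, hε, ‖1 - (p.1 : ℂ) * p.2‖, ?_, hball, ?_⟩
  · have hne := ne_zero_of_offCut (hball hpK.2) hpK.1.1 hpK.1.2
    exact norm_pos_iff.mpr hne
  · intro t ht x hx
    exact isMinOn_iff.mp hpmin (t, x) (Set.mk_mem_prod ht hx)

/-- Derivative of the dilogarithm. -/
lemma hasDerivAt_dilog {z : ℂ} (hz : OffCut z) :
    HasDerivAt dilog (∫ t in (0:ℝ)..1, (1 - (t : ℂ) * z)⁻¹) z := by
  obtain ⟨ε, hε, c, hc, hball, hbound⟩ := exists_ball_bound hz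
  set F : ℂ → ℝ → ℂ := fun x t => Complex.log (1 - (t : ℂ) * x) / (t : ℂ) with hF
  set F' : ℂ → ℝ → ℂ := fun x t => -(1 - (t : ℂ) * x)⁻¹ with hF'
  have hIoc : Set.uIoc (0:ℝ) 1 = Ioc (0:ℝ) 1 := uIoc_of_le zero_le_one
  -- measurability for x in the closed ball
  have hmeas : ∀ x ∈ closedBall z ε, AEStronglyMeasurable (F x) (volume.restrict (Set.uIoc (0:ℝ) 1)) := by
    intro x hx
    rw [hIoc]
    apply ContinuousOn.aestronglyMeasurable _ measurableSet_Ioc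
    intro t ht
    have h1 : (1 : ℂ) - (t : ℂ) * x ≠ 0 := ne_zero_of_offCut (hball hx) ht.1.le ht.2
    have hslit : (1 : ℂ) - (t : ℂ) * x ∈ Complex.slitPlane := slit_of_offCut (hball hx) ht.1.le ht.2
    apply ContinuousWithinAt.div
    · exact ((continuous_const.sub (Complex.continuous_ofReal.mul
        continuous_const)).continuousWithinAt).clog hslit
    · exact Complex.continuous_ofReal.continuousWithinAt
    · exact_mod_cast ne_of_gt ht.1
  -- integrability of F z
  have hFz_int : IntervalIntegrable (F z) volume 0 1 := by
    set G : ℝ → ℂ := fun t => if t = 0 then -z else Complex.log (1 - (t : ℂ) * z) / (t : ℂ) with hG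
    have hGcont : ContinuousOn G (Icc (0:ℝ) 1) := by
      intro t ht
      rcases eq_or_ne t 0 with rfl | ht0
      · -- continuity at 0 via the derivative of log(1 - t z) at t = 0
        have hinner : HasDerivAt (fun t : ℝ => (1 : ℂ) - (t : ℂ) * z) (-z) 0 := by
          simpa using ((Complex.ofRealCLM.hasDerivAt (x := (0:ℝ))).mul_const z).const_sub 1
        have hlog : HasDerivAt (fun t : ℝ => Complex.log (1 - (t : ℂ) * z)) (-z) 0 := by
          have := hinner.clog_real (by simpa using slit_of_offCut hz le_rfl zero_le_one)
          simpa using this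
        have hslope := hasDerivAt_iff_tendsto_slope.mp hlog
        have hG0 : Tendsto G (𝓝[≠] (0:ℝ)) (𝓝 (-z)) := by
          apply hslope.congr'
          filter_upwards [self_mem_nhdsWithin] with t ht
          have ht0 : t ≠ 0 := ht
          simp only [hG, if_neg ht0, slope_def_module]
          simp only [Complex.ofReal_zero, zero_mul, sub_zero, Complex.log_one, sub_zero]
          rw [Complex.real_smul, Complex.ofReal_inv, inv_mul_eq_div]
        have : Tendsto G (𝓝 (0:ℝ)) (𝓝 (-z)) := by
          rw [← nhdsNE_sup_pure]
          refine Tendsto.sup hG0 ?_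
          have : G 0 = -z := by simp [hG]
          rw [← this]
          exact tendsto_pure_nhds G 0
        have : ContinuousAt G 0 := by rwa [ContinuousAt, show G 0 = -z by simp [hG]]
        exact this.continuousWithinAt
      · apply ContinuousAt.continuousWithinAt
        have hev : ∀ᶠ s in 𝓝 t, G s = Complex.log (1 - (s : ℂ) * z) / (s : ℂ) := by
          filter_upwards [isOpen_compl_singleton.mem_nhds ht0] with s hs
          exact if_neg hs
        have hslit : (1 : ℂ) - (t : ℂ) * z ∈ Complex.slitPlane := slit_of_offCut hz ht.1 ht.2
        have hca : ContinuousAt (fun s : ℝ => Complex.log (1 - (s : ℂ) * z) / (s : ℂ)) t := by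
          apply ContinuousAt.div
          · exact ((continuous_const.sub (Complex.continuous_ofReal.mul
              continuous_const)).continuousAt).clog hslit
          · exact Complex.continuous_ofReal.continuousAt
          · exact_mod_cast ht0
        exact hca.congr (Filter.EventuallyEq.symm hev)
    have hGint : IntervalIntegrable G volume 0 1 :=
      (hGcont.mono (by rw [uIcc_of_le zero_le_one])).intervalIntegrable
    apply hGint.congr
    rw [hIoc]
    intro t ht
    simp only [hG, if_neg (ne_of_gt ht.1)]
    rfl
  -- apply the dominated differentiation theorem
  have key := intervalIntegral.hasDerivAt_integral_of_dominated_loc_of_deriv_le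
    (F := F) (F' := F') (x₀ := z) (a := 0) (b := 1) (bound := fun _ => c⁻¹) (Metric.ball_mem_nhds z hε)
    ?_ hFz_int ?_ ?_ ?_ ?_
  · have h2 : HasDerivAt (fun x => -∫ t in (0:ℝ)..1, F x t)
        (-∫ t in (0:ℝ)..1, F' z t) z := key.2.neg
    have : dilog = fun x => -∫ t in (0:ℝ)..1, F x t := rfl
    rw [this]
    convert h2 using 1
    rw [hF']
    simp only [intervalIntegral.integral_neg, neg_neg]
  · filter_upwards [Metric.closedBall_mem_nhds z hε] with x hx using hmeas x hx
  · rw [hIoc]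
    apply ContinuousOn.aestronglyMeasurable _ measurableSet_Ioc
    intro t ht
    exact ((continuous_const.sub (Complex.continuous_ofReal.mul
      continuous_const)).continuousWithinAt.inv₀
        (ne_zero_of_offCut hz ht.1.le ht.2)).neg
  · apply Filter.Eventually.of_forall
    intro t ht x hx
    have hx' : x ∈ closedBall z ε := ball_subset_closedBall hx
    rw [hIoc] at ht
    have hb := hbound t ⟨ht.1.le, ht.2⟩ x hx'
    rw [hF']
    simp only [norm_neg, norm_inv]
    exact inv_anti₀ hc hb
  · exact intervalIntegrable_const
  · apply Filter.Eventually.of_forall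
    intro t ht x hx
    rw [hIoc] at ht
    have hx' : x ∈ closedBall z ε := ball_subset_closedBall hx
    have hslit : (1 : ℂ) - (t : ℂ) * x ∈ Complex.slitPlane :=
      slit_of_offCut (hball hx') ht.1.le ht.2
    have ht0 : (t : ℂ) ≠ 0 := by exact_mod_cast ne_of_gt ht.1
    have hinner : HasDerivAt (fun y : ℂ => (1 : ℂ) - (t : ℂ) * y) (-(t : ℂ)) x := by
      simpa using ((hasDerivAt_id x).const_mul (t : ℂ)).const_sub 1
    have hlog := (hinner.clog hslit).div_const (t : ℂ)
    refine hlog.congr_deriv (Eq.symm ?_)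
    show -(1 - (t:ℂ) * x)⁻¹ = -(t:ℂ) / (1 - (t:ℂ) * x) / (t:ℂ)
    have hne : (1:ℂ) - (t:ℂ) * x ≠ 0 := Complex.slitPlane_ne_zero hslit
    field_simp


/-- Closed form of the derivative integral. -/
lemma integral_inv_eq {z : ℂ} (hz : OffCut z) (h0 : z ≠ 0) :
    ∫ t in (0:ℝ)..1, (1 - (t : ℂ) * z)⁻¹ = -Complex.log (1 - z) / z := by
  have hderiv : ∀ t ∈ uIcc (0:ℝ) 1,
      HasDerivAt (fun t : ℝ => -Complex.log (1 - (t : ℂ) * z) / z) ((1 - (t : ℂ) * z)⁻¹) t := by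
    intro t ht
    rw [uIcc_of_le zero_le_one] at ht
    have hslit := slit_of_offCut hz ht.1 ht.2
    have hne := Complex.slitPlane_ne_zero hslit
    have hinner : HasDerivAt (fun t : ℝ => (1 : ℂ) - (t : ℂ) * z) (-z) t := by
      simpa using ((Complex.ofRealCLM.hasDerivAt (x := t)).mul_const z).const_sub 1
    have h := ((hinner.clog_real hslit).neg).div_const z
    refine h.congr_deriv ?_
    field_simp
  have hint : IntervalIntegrable (fun t : ℝ => (1 - (t : ℂ) * z)⁻¹) MeasureTheory.volume 0 1 := by
    apply ContinuousOn.intervalIntegrable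
    rw [uIcc_of_le zero_le_one]
    intro t ht
    exact ((continuous_const.sub (Complex.continuous_ofReal.mul
      continuous_const)).continuousWithinAt).inv₀ (ne_zero_of_offCut hz ht.1 ht.2)
  rw [intervalIntegral.integral_eq_sub_of_hasDerivAt hderiv hint]
  simp [Complex.log_one]

/-- The Möbius image `(1-w)/(1+w)` avoids the closed negative real axis. -/
lemma mobius_ok {w : ℂ} (hw1 : ¬(w.im = 0 ∧ w.re ≤ -1)) (hw2 : ¬(w.im = 0 ∧ 1 ≤ w.re)) :
    ((1 - w) / (1 + w)).im ≠ 0 ∨ 0 < ((1 - w) / (1 + w)).re := by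
  have hp : (1 : ℂ) + w ≠ 0 := by
    intro h
    have hw : w = -1 := by linear_combination h
    exact hw1 (by simp [hw])
  have hn : 0 < Complex.normSq (1 + w) := Complex.normSq_pos.mpr hp
  by_cases hy : w.im = 0
  · right
    push_neg at hw1 hw2
    have h1 := hw1 hy
    have h2 := hw2 hy
    rw [Complex.div_re]
    simp only [Complex.sub_re, Complex.sub_im, Complex.add_re, Complex.add_im, Complex.one_re,
      Complex.one_im, hy, zero_add, neg_zero, sub_zero, zero_sub]
    have hnsq : Complex.normSq (1 + w) = (1 + w.re)^2 := by
      rw [Complex.normSq_apply]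
      simp [Complex.add_re, Complex.add_im, hy]
      ring
    rw [hnsq]
    have h3 : 0 < 1 + w.re := by linarith
    have h4 : 0 < 1 - w.re := by linarith
    have hnum : (0:ℝ) < (1 - w.re) * (1 + w.re) + 0 * 0 := by nlinarith
    have hden : (0:ℝ) < (1 + w.re)^2 := by positivity
    have := div_pos hnum hden
    rw [add_div] at this
    exact this
  · left
    rw [Complex.div_im]
    simp only [Complex.sub_re, Complex.sub_im, Complex.add_re, Complex.add_im, Complex.one_re,
      Complex.one_im, zero_add, zero_sub]
    intro h
    apply hy
    rw [div_sub_div_same] at h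
    have hnum : -w.im * (1 + w.re) - (1 - w.re) * w.im = -2 * w.im := by ring
    rw [hnum] at h
    have := div_eq_zero_iff.mp h
    rcases this with h' | h'
    · linarith
    · exact absurd h' (ne_of_gt hn)

lemma one_add_ne {w : ℂ} (hw1 : ¬(w.im = 0 ∧ w.re ≤ -1)) : (1 : ℂ) + w ≠ 0 := by
  intro h
  have hw : w = -1 := by linear_combination h
  exact hw1 (by simp [hw])

lemma one_sub_ne {w : ℂ} (hw2 : ¬(w.im = 0 ∧ 1 ≤ w.re)) : (1 : ℂ) - w ≠ 0 := by
  intro h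
  have hw : w = 1 := by linear_combination -h
  exact hw2 (by simp [hw])

lemma mobius_id {v : ℂ} (hv : (1 : ℂ) + v ≠ 0) :
    (1 : ℂ) - 2 * v / (1 + v) = (1 - v) / (1 + v) := by
  field_simp
  ring

lemma offCut_mobius {w : ℂ} (hw1 : ¬(w.im = 0 ∧ w.re ≤ -1)) (hw2 : ¬(w.im = 0 ∧ 1 ≤ w.re)) :
    OffCut (2 * w / (1 + w)) := by
  rintro ⟨him, hre⟩
  have hid := mobius_id (one_add_ne hw1)
  rcases mobius_ok hw1 hw2 with h | h
  · apply h
    rw [← hid]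
    simp [Complex.sub_im, him]
  · rw [← hid] at h
    simp only [Complex.sub_re, Complex.one_re] at h
    linarith

lemma slit_mobius {w : ℂ} (hw1 : ¬(w.im = 0 ∧ w.re ≤ -1)) (hw2 : ¬(w.im = 0 ∧ 1 ≤ w.re)) :
    (1 - w) / (1 + w) ∈ Complex.slitPlane := by
  rw [Complex.mem_slitPlane_iff]
  rcases mobius_ok hw1 hw2 with h | h
  · right; exact h
  · left; exact h

lemma arg_mobius {w : ℂ} (hw1 : ¬(w.im = 0 ∧ w.re ≤ -1)) (hw2 : ¬(w.im = 0 ∧ 1 ≤ w.re)) :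
    ((1 - w) / (1 + w)).arg ≠ Real.pi := by
  intro h
  rw [Complex.arg_eq_pi_iff] at h
  rcases mobius_ok hw1 hw2 with h' | h'
  · exact h' h.2
  · linarith [h.1]

/-- Derivative of `scrH`. -/
lemma hasDerivAt_scrH {w : ℂ} (hw1 : ¬(w.im = 0 ∧ w.re ≤ -1)) (hw2 : ¬(w.im = 0 ∧ 1 ≤ w.re)) :
    HasDerivAt scrH
      ((∫ t in (0:ℝ)..1, (1 - (t : ℂ) * (2 * w / (1 + w)))⁻¹) * (2 / (1 + w)^2)
        - Complex.log ((1 - w) / (1 + w)) / (1 - w^2)) w := by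
  have hp : (1 : ℂ) + w ≠ 0 := one_add_ne hw1
  have hq : (1 : ℂ) - w ≠ 0 := one_sub_ne hw2
  have hA : HasDerivAt (fun u : ℂ => 2 * u / (1 + u)) (2 / (1 + w)^2) w := by
    have h1 : HasDerivAt (fun u : ℂ => 2 * u) 2 w := by
      simpa using (hasDerivAt_id w).const_mul (2 : ℂ)
    have h2 : HasDerivAt (fun u : ℂ => 1 + u) 1 w := by
      simpa using (hasDerivAt_id w).const_add (1 : ℂ)
    have h := h1.div h2 hp
    refine h.congr_deriv ?_
    field_simp
    ring
  have hdl := (hasDerivAt_dilog (offCut_mobius hw1 hw2)).comp w hA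
  have hM : HasDerivAt (fun u : ℂ => (1 - u) / (1 + u)) (-2 / (1 + w)^2) w := by
    have h1 : HasDerivAt (fun u : ℂ => 1 - u) (-1) w := by
      simpa using (hasDerivAt_id w).const_sub (1 : ℂ)
    have h2 : HasDerivAt (fun u : ℂ => 1 + u) 1 w := by
      simpa using (hasDerivAt_id w).const_add (1 : ℂ)
    have h := h1.div h2 hp
    refine h.congr_deriv ?_
    field_simp
    ring
  have hlog := hM.clog (slit_mobius hw1 hw2)
  have hsq := hlog.pow 2
  have hfinal := hdl.add (hsq.const_mul ((1 : ℂ)/4))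
  have hgoal : HasDerivAt
      (fun u => dilog (2 * u / (1 + u)) + (1/4) * (Complex.log ((1 - u) / (1 + u)))^2)
      ((∫ t in (0:ℝ)..1, (1 - (t : ℂ) * (2 * w / (1 + w)))⁻¹) * (2 / (1 + w)^2)
        - Complex.log ((1 - w) / (1 + w)) / (1 - w^2)) w := by
    refine hfinal.congr_deriv ?_
    rw [mul_comm ((1:ℂ)/4)]
    have hsq2 : (1 : ℂ) - w^2 ≠ 0 := by
      have h : (1 : ℂ) - w^2 = (1 - w) * (1 + w) := by ring
      rw [h]
      exact mul_ne_zero hq hp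
    set L := Complex.log ((1 - w) / (1 + w))
    set I := ∫ t in (0:ℝ)..1, (1 - (t : ℂ) * (2 * w / (1 + w)))⁻¹
    norm_num
    field_simp [hp, hq, hsq2]
    ring
  exact hgoal

/-- The key identity: the derivative expression of `scrH` is even. -/
lemma key_identity {w : ℂ} (hw1 : ¬(w.im = 0 ∧ w.re ≤ -1)) (hw2 : ¬(w.im = 0 ∧ 1 ≤ w.re)) :
    ((∫ t in (0:ℝ)..1, (1 - (t : ℂ) * (2 * w / (1 + w)))⁻¹) * (2 / (1 + w)^2)
        - Complex.log ((1 - w) / (1 + w)) / (1 - w^2))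
    = ((∫ t in (0:ℝ)..1, (1 - (t : ℂ) * (2 * -w / (1 + -w)))⁻¹) * (2 / (1 + -w)^2)
        - Complex.log ((1 - -w) / (1 + -w)) / (1 - (-w)^2)) := by
  have hw1' : ¬((-w).im = 0 ∧ (-w).re ≤ -1) := by
    rintro ⟨h1, h2⟩
    simp only [Complex.neg_im, Complex.neg_re, neg_eq_zero] at h1 h2
    exact hw2 ⟨h1, by linarith⟩
  have hw2' : ¬((-w).im = 0 ∧ 1 ≤ (-w).re) := by
    rintro ⟨h1, h2⟩
    simp only [Complex.neg_im, Complex.neg_re, neg_eq_zero] at h1 h2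
    exact hw1 ⟨h1, by linarith⟩
  have hp : (1 : ℂ) + w ≠ 0 := one_add_ne hw1
  have hq : (1 : ℂ) - w ≠ 0 := one_sub_ne hw2
  have hinv : (1 - -w) / (1 + -w) = ((1 - w) / (1 + w))⁻¹ := by
    rw [inv_div]
    congr 1 <;> ring
  have hlogneg : Complex.log ((1 - -w) / (1 + -w)) = -Complex.log ((1 - w) / (1 + w)) := by
    rw [hinv, Complex.log_inv _ (arg_mobius hw1 hw2)]
  rcases eq_or_ne w 0 with rfl | hw0
  · norm_num
  · have ha0 : 2 * w / (1 + w) ≠ 0 := div_ne_zero (mul_ne_zero two_ne_zero hw0) hp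
    have hb0 : 2 * -w / (1 + -w) ≠ 0 := by
      apply div_ne_zero (mul_ne_zero two_ne_zero (neg_ne_zero.mpr hw0))
      intro h
      exact hq (by linear_combination h)
    rw [integral_inv_eq (offCut_mobius hw1 hw2) ha0,
        integral_inv_eq (offCut_mobius hw1' hw2') hb0,
        mobius_id hp, mobius_id (one_add_ne hw1'), hlogneg]
    have hsq2 : (1 : ℂ) - w^2 ≠ 0 := by
      have h : (1 : ℂ) - w^2 = (1 - w) * (1 + w) := by ring
      rw [h]
      exact mul_ne_zero hq hp
    have hq' : (1 : ℂ) + -w ≠ 0 := by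
      intro h; exact hq (by linear_combination h)
    set L := Complex.log ((1 - w) / (1 + w))
    field_simp [hp, hq, hq', hw0, hsq2]
    ring

end ScrHAux

/-- `𝓗` is odd away from the branch cuts `(-∞,-1] ∪ [1,∞)`. -/
theorem scrH_odd (w : ℂ)
    (hw1 : ¬(w.im = 0 ∧ w.re ≤ -1))
    (hw2 : ¬(w.im = 0 ∧ 1 ≤ w.re)) :
    scrH (-w) = -scrH w := by
  have hkey : scrH w + scrH (-w) = 0 := by
    set g : ℂ → ℂ := fun u => scrH u + scrH (-u) with hg
    -- the segment from 0 to w stays in the domain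
    have hseg : ∀ x ∈ segment ℝ (0:ℂ) w,
        ¬(x.im = 0 ∧ x.re ≤ -1) ∧ ¬(x.im = 0 ∧ 1 ≤ x.re) := by
      rintro x ⟨a, b, ha, hb, hab, rfl⟩
      have hb1 : b ≤ 1 := by linarith
      simp only [smul_zero, zero_add]
      constructor
      · rintro ⟨h1, h2⟩
        rw [Complex.smul_im, smul_eq_mul] at h1
        rw [Complex.smul_re, smul_eq_mul] at h2
        rcases eq_or_lt_of_le hb with rfl | hbpos
        · simp at h2; linarith
        · have him : w.im = 0 := by
            rcases mul_eq_zero.mp h1 with h | h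
            · exact absurd h hbpos.ne'
            · exact h
          push_neg at hw1
          have := hw1 him
          nlinarith
      · rintro ⟨h1, h2⟩
        rw [Complex.smul_im, smul_eq_mul] at h1
        rw [Complex.smul_re, smul_eq_mul] at h2
        rcases eq_or_lt_of_le hb with rfl | hbpos
        · simp at h2; linarith
        · have him : w.im = 0 := by
            rcases mul_eq_zero.mp h1 with h | h
            · exact absurd h hbpos.ne'
            · exact h
          push_neg at hw2
          have := hw2 him
          nlinarith
    -- g has zero derivative on the segment
    have hderiv : ∀ x ∈ segment ℝ (0:ℂ) w,
        HasFDerivWithinAt g (0 : ℂ →L[ℂ] ℂ) (segment ℝ (0:ℂ) w) x := by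
      intro x hx
      obtain ⟨h1, h2⟩ := hseg x hx
      have h1' : ¬((-x).im = 0 ∧ (-x).re ≤ -1) := by
        rintro ⟨ha, hb⟩
        simp only [Complex.neg_im, Complex.neg_re, neg_eq_zero] at ha hb
        exact h2 ⟨ha, by linarith⟩
      have h2' : ¬((-x).im = 0 ∧ 1 ≤ (-x).re) := by
        rintro ⟨ha, hb⟩
        simp only [Complex.neg_im, Complex.neg_re, neg_eq_zero] at ha hb
        exact h1 ⟨ha, by linarith⟩
      have hd1 := ScrHAux.hasDerivAt_scrH h1 h2
      have hd2 := (ScrHAux.hasDerivAt_scrH h1' h2').comp x (hasDerivAt_neg x)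
      have hsum := hd1.add hd2
      have h0 : HasDerivAt g 0 x := by
        refine hsum.congr_deriv ?_
        rw [ScrHAux.key_identity h1 h2]
        ring
      have hF := hasDerivAt_iff_hasFDerivAt.mp h0
      have h00 : (ContinuousLinearMap.toSpanSingleton ℂ (0:ℂ)) = 0 := by
        ext y; simp
      rw [h00] at hF
      exact hF.hasFDerivWithinAt
    have hconv : Convex ℝ (segment ℝ (0:ℂ) w) := convex_segment 0 w
    have hle := hconv.norm_image_sub_le_of_norm_hasFDerivWithin_le (C := 0) hderiv
      (fun x _ => by simp) (left_mem_segment ℝ (0:ℂ) w) (right_mem_segment ℝ (0:ℂ) w)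
    have hg0 : g 0 = 0 := by
      simp [hg, scrH, dilog, Complex.log_one]
    have : g w = g 0 := by
      rw [← sub_eq_zero]
      have := hle
      simp only [zero_mul] at this
      exact norm_le_zero_iff.mp this
    rw [hg0] at this
    exact this
  linear_combination hkey
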